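/- For every natural number n ≥ 1 and every real t, Σ_{r=1}^{2n+1} ((−2n)^r / r!) Σ_{(k_1,…,k_r)} [B_{k_1}(t) ⋯ B_{k_r}(t)] / (k_1 ⋯ k_r) = 0, where the inner sum ranges over all r-tuples (k_1,…,k_r) of positive integers with k_1 + ⋯ + k_r = 2n+1. (Equivalently, this holds as an identity of polynomials in t.) -/

import Mathlib

open Finset Polynomial

namespace Bern18

/-- Reflection formula for Bernoulli polynomials. -/
lemma bernoulli_comp_one_sub (k : ℕ) :
    (Polynomial.bernoulli k).comp (1 - Polynomial.X) =
      Polynomial.C ((-1 : ℚ) ^ k) * Polynomial.bernoulli k := by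
  induction k with
  | zero => simp [Polynomial.bernoulli_zero]
  | succ k ih =>
    have hder : Polynomial.derivative
        ((Polynomial.bernoulli (k + 1)).comp (1 - Polynomial.X)
          - Polynomial.C ((-1 : ℚ) ^ (k + 1)) * Polynomial.bernoulli (k + 1)) = 0 := by
      rw [derivative_sub, Polynomial.derivative_comp_one_sub_X,
        Polynomial.derivative_bernoulli_add_one, derivative_C_mul,
        Polynomial.derivative_bernoulli_add_one]
      rw [Polynomial.mul_comp, Polynomial.add_comp, Polynomial.natCast_comp,
        Polynomial.one_comp, ih]
      simp only [pow_succ, map_mul, map_neg, map_one]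
      ring
    have h0 := Polynomial.eq_C_of_derivative_eq_zero hder
    have hc : ((Polynomial.bernoulli (k + 1)).comp (1 - Polynomial.X)
        - Polynomial.C ((-1 : ℚ) ^ (k + 1)) * Polynomial.bernoulli (k + 1)).coeff 0 = 0 := by
      rw [Polynomial.coeff_zero_eq_eval_zero]
      rw [Polynomial.eval_sub, Polynomial.eval_comp, Polynomial.eval_mul, Polynomial.eval_C]
      have h1 : Polynomial.eval (0 : ℚ) (1 - Polynomial.X) = 1 := by simp
      rw [h1, Polynomial.bernoulli_eval_one, Polynomial.bernoulli_eval_zero]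
      rcases Nat.even_or_odd (k + 1) with he | ho
      · have hne : k + 1 ≠ 1 := by rintro h; rw [h] at he; exact (Nat.not_even_one) he
        rw [bernoulli_eq_bernoulli'_of_ne_one hne, he.neg_one_pow, one_mul, sub_self]
      · rcases Nat.lt_or_ge 1 (k + 1) with hlt | hle
        · have hne : k + 1 ≠ 1 := by omega
          rw [bernoulli_eq_bernoulli'_of_ne_one hne, bernoulli'_eq_zero_of_odd ho hlt]
          ring
        · have h1 : k = 0 := by omega
          subst h1
          norm_num [bernoulli'_one, _root_.bernoulli_one]
    rw [hc, map_zero] at h0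
    exact sub_eq_zero.mp h0

/-- Odd Bernoulli polynomials vanish at 1/2. -/
lemma bernoulli_eval_half {j : ℕ} (hj : Odd j) :
    Polynomial.eval (1 / 2 : ℚ) (Polynomial.bernoulli j) = 0 := by
  have h := congrArg (Polynomial.eval (1 / 2 : ℚ)) (bernoulli_comp_one_sub j)
  rw [Polynomial.eval_comp, Polynomial.eval_mul, Polynomial.eval_C, hj.neg_one_pow] at h
  have h2 : Polynomial.eval (1 / 2 : ℚ) (1 - Polynomial.X) = 1 / 2 := by
    simp; norm_num
  rw [h2] at h
  linarith


lemma derivative_finset_prod {ι : Type*} [DecidableEq ι] (s : Finset ι) (f : ι → Polynomial ℚ) :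
    Polynomial.derivative (∏ i ∈ s, f i)
      = ∑ i ∈ s, (∏ j ∈ s.erase i, f j) * Polynomial.derivative (f i) := by
  induction s using Finset.induction_on with
  | empty => simp
  | insert a s ha ih =>
    rw [Finset.prod_insert ha, Polynomial.derivative_mul, ih, Finset.sum_insert ha,
      Finset.erase_insert ha, Finset.mul_sum]
    congr 1
    · exact mul_comm _ _
    · refine Finset.sum_congr rfl fun i hi => ?_
      have hia : a ≠ i := fun h => ha (h ▸ hi)
      rw [Finset.erase_insert_of_ne hia,
        Finset.prod_insert (fun h => ha (Finset.mem_of_mem_erase h)), mul_assoc]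

lemma prod_erase_univ {M : Type*} [CommMonoid M] {r : ℕ} (g : Fin (r + 1) → M) (i : Fin (r + 1)) :
    ∏ j ∈ Finset.univ.erase i, g j = ∏ j : Fin r, g (i.succAbove j) := by
  have h : (Finset.univ : Finset (Fin (r + 1))).erase i
      = Finset.univ.map (Fin.succAboveEmb i) := by
    rw [Fin.univ_succAbove r i, Finset.erase_cons]
  rw [h, Finset.prod_map]
  rfl

noncomputable def ff (j : ℕ) : Polynomial ℚ :=
  Polynomial.C ((j : ℚ)⁻¹) * Polynomial.bernoulli j

noncomputable def DD {r : ℕ} (k : Fin r → ℕ) : Polynomial ℚ := ∏ i, ff (k i)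

noncomputable def TT (r m : ℕ) : Finset (Fin r → ℕ) :=
  (Finset.Nat.antidiagonalTuple r m).filter (fun k => ∀ i, 1 ≤ k i)

noncomputable def PP (r m : ℕ) : Polynomial ℚ := ∑ k ∈ TT r m, DD k

lemma mem_TT {r m : ℕ} {k : Fin r → ℕ} :
    k ∈ TT r m ↔ (∑ i, k i) = m ∧ ∀ i, 1 ≤ k i := by
  simp [TT, Finset.Nat.mem_antidiagonalTuple]

lemma PP_zero_left {m : ℕ} (hm : 1 ≤ m) : PP 0 m = 0 := by
  rw [PP]
  convert Finset.sum_empty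
  ext k
  simp only [mem_TT, Finset.univ_eq_empty, Finset.sum_empty, Finset.notMem_empty, iff_false,
    not_and]
  intro h
  omega

lemma PP_of_lt {r m : ℕ} (h : m < r) : PP r m = 0 := by
  rw [PP]
  convert Finset.sum_empty
  ext k
  simp only [mem_TT, Finset.notMem_empty, iff_false, not_and]
  intro hsum hpos
  have h1 : r ≤ ∑ i, k i := by
    calc r = ∑ _i : Fin r, 1 := by simp
    _ ≤ ∑ i, k i := Finset.sum_le_sum fun i _ => hpos i
  omega

lemma derivative_ff {j : ℕ} (hj : 1 ≤ j) :
    Polynomial.derivative (ff j) = Polynomial.bernoulli (j - 1) := by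
  rw [ff, derivative_C_mul, Polynomial.derivative_bernoulli, ← mul_assoc,
    ← Polynomial.C_eq_natCast, ← Polynomial.C_mul,
    inv_mul_cancel₀ (Nat.cast_ne_zero.mpr (by omega) : (j : ℚ) ≠ 0), Polynomial.C_1, one_mul]

lemma bernoulli_eq_C_mul_ff {j : ℕ} (hj : 1 ≤ j) :
    Polynomial.bernoulli j = Polynomial.C ((j : ℚ)) * ff j := by
  rw [ff, ← mul_assoc, ← Polynomial.C_mul,
    mul_inv_cancel₀ (Nat.cast_ne_zero.mpr (by omega) : (j : ℚ) ≠ 0), Polynomial.C_1, one_mul]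

lemma sum_part1 {r m : ℕ} (i : Fin (r + 1)) :
    ∑ k ∈ (TT (r + 1) (m + 1)).filter (fun k => k i = 1),
        ∏ j ∈ Finset.univ.erase i, ff (k j) = PP r m := by
  rw [PP]
  refine Finset.sum_nbij' (fun k => Fin.removeNth i k) (fun k' => Fin.insertNth i 1 k')
    ?_ ?_ ?_ ?_ ?_
  · intro k hk
    obtain ⟨hk, hki⟩ := Finset.mem_filter.mp hk
    obtain ⟨hsum, hpos⟩ := mem_TT.mp hk
    rw [Fin.sum_univ_succAbove k i, hki] at hsum
    refine mem_TT.mpr ⟨?_, fun j => hpos _⟩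
    simp only [Fin.removeNth]
    omega
  · intro k' hk'
    obtain ⟨hsum, hpos⟩ := mem_TT.mp hk'
    refine Finset.mem_filter.mpr ⟨mem_TT.mpr ⟨?_, ?_⟩, Fin.insertNth_apply_same (α := fun _ => ℕ) i 1 k'⟩
    · rw [Fin.sum_univ_succAbove _ i, Fin.insertNth_apply_same]
      simp only [Fin.insertNth_apply_succAbove]
      omega
    · intro j
      rcases eq_or_ne j i with rfl | hne
      · rw [Fin.insertNth_apply_same]
      · obtain ⟨j', rfl⟩ := Fin.exists_succAbove_eq hne
        rw [Fin.insertNth_apply_succAbove]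
        exact hpos j'
  · intro k hk
    obtain ⟨_, hki⟩ := Finset.mem_filter.mp hk
    have h := Fin.insertNth_self_removeNth i k
    rw [hki] at h
    exact h
  · intro k' _
    exact funext fun j => Fin.insertNth_apply_succAbove (α := fun _ => ℕ) i 1 k' j
  · intro k _
    rw [prod_erase_univ (fun j => ff (k j)) i]
    rfl

lemma sum_part2 {r m : ℕ} (i : Fin (r + 1)) :
    ∑ k ∈ (TT (r + 1) (m + 1)).filter (fun k => ¬ k i = 1),
        (∏ j ∈ Finset.univ.erase i, ff (k j)) * Polynomial.bernoulli (k i - 1)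
      = ∑ k' ∈ TT (r + 1) m, Polynomial.C ((k' i : ℚ)) * DD k' := by
  refine Finset.sum_nbij' (fun k => Function.update k i (k i - 1))
    (fun k' => Function.update k' i (k' i + 1)) ?_ ?_ ?_ ?_ ?_
  · intro k hk
    obtain ⟨hk, hki⟩ := Finset.mem_filter.mp hk
    obtain ⟨hsum, hpos⟩ := mem_TT.mp hk
    have h2 : 2 ≤ k i := by have := hpos i; omega
    refine mem_TT.mpr ⟨?_, ?_⟩
    · rw [Finset.sum_update_of_mem (Finset.mem_univ i), Finset.sdiff_singleton_eq_erase]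
      have h3 : ∑ j ∈ Finset.univ.erase i, k j + k i = m + 1 := by
        rw [Finset.sum_erase_add _ _ (Finset.mem_univ i)]
        exact hsum
      omega
    · intro j
      rcases eq_or_ne j i with rfl | hne
      · rw [Function.update_self]; omega
      · rw [Function.update_of_ne hne]; exact hpos j
  · intro k' hk'
    obtain ⟨hsum, hpos⟩ := mem_TT.mp hk'
    refine Finset.mem_filter.mpr ⟨mem_TT.mpr ⟨?_, ?_⟩, ?_⟩
    · rw [Finset.sum_update_of_mem (Finset.mem_univ i), Finset.sdiff_singleton_eq_erase]
      have h3 : ∑ j ∈ Finset.univ.erase i, k' j + k' i = m := by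
        rw [Finset.sum_erase_add _ _ (Finset.mem_univ i)]
        exact hsum
      omega
    · intro j
      rcases eq_or_ne j i with rfl | hne
      · rw [Function.update_self]; omega
      · rw [Function.update_of_ne hne]; exact hpos j
    · rw [Function.update_self]
      have := hpos i
      omega
  · intro k hk
    obtain ⟨hk2, hki⟩ := Finset.mem_filter.mp hk
    obtain ⟨_, hpos⟩ := mem_TT.mp hk2
    have h2 : 2 ≤ k i := by have := hpos i; omega
    rw [Function.update_self, Function.update_idem]
    have h3 : k i - 1 + 1 = k i := by omega
    rw [h3, Function.update_eq_self]
  · intro k' hk'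
    rw [Function.update_self, Function.update_idem]
    have h3 : k' i + 1 - 1 = k' i := rfl
    rw [h3, Function.update_eq_self]
  · intro k hk
    obtain ⟨hk2, hki⟩ := Finset.mem_filter.mp hk
    obtain ⟨-, hpos⟩ := mem_TT.mp hk2
    have h2 : 2 ≤ k i := by have := hpos i; omega
    have hup : ∀ j ∈ Finset.univ.erase i,
        ff (Function.update k i (k i - 1) j) = ff (k j) :=
      fun j hj => by rw [Function.update_of_ne (Finset.ne_of_mem_erase hj)]
    rw [DD, ← Finset.mul_prod_erase _ _ (Finset.mem_univ i),
      Finset.prod_congr rfl hup, Function.update_self,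
      bernoulli_eq_C_mul_ff (show 1 ≤ k i - 1 by omega)]
    ring

lemma derivative_PP (r m : ℕ) :
    Polynomial.derivative (PP (r + 1) (m + 1))
      = Polynomial.C ((r : ℚ) + 1) * PP r m
        + Polynomial.C ((m : ℚ)) * PP (r + 1) m := by
  rw [PP, derivative_sum]
  have h1 : ∀ k ∈ TT (r + 1) (m + 1), Polynomial.derivative (DD k)
      = ∑ i, (∏ j ∈ Finset.univ.erase i, ff (k j)) * Polynomial.bernoulli (k i - 1) := by
    intro k hk
    obtain ⟨-, hpos⟩ := mem_TT.mp hk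
    rw [DD, derivative_finset_prod]
    exact Finset.sum_congr rfl fun i _ => by rw [derivative_ff (hpos i)]
  rw [Finset.sum_congr rfl h1, Finset.sum_comm]
  have h2 : ∀ i : Fin (r + 1),
      (∑ k ∈ TT (r + 1) (m + 1),
        (∏ j ∈ Finset.univ.erase i, ff (k j)) * Polynomial.bernoulli (k i - 1))
      = PP r m + ∑ k' ∈ TT (r + 1) m, Polynomial.C ((k' i : ℚ)) * DD k' := by
    intro i
    rw [← Finset.sum_filter_add_sum_filter_not (TT (r + 1) (m + 1)) (fun k => k i = 1)]
    congr 1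
    · rw [← sum_part1 i]
      refine Finset.sum_congr rfl fun k hk => ?_
      have hki : k i = 1 := (Finset.mem_filter.mp hk).2
      rw [hki]
      simp [Polynomial.bernoulli_zero]
    · exact sum_part2 i
  rw [Finset.sum_congr rfl fun i _ => h2 i, Finset.sum_add_distrib]
  congr 1
  · rw [Finset.sum_const, Finset.card_univ, Fintype.card_fin, nsmul_eq_mul]
    congr 1
    rw [← Polynomial.C_eq_natCast]
    push_cast
    rfl
  · rw [Finset.sum_comm, PP, Finset.mul_sum]
    apply Finset.sum_congr rfl
    intro k hk
    have hsum := (mem_TT.mp hk).1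
    rw [← Finset.sum_mul, ← map_sum Polynomial.C (fun x => ((k x : ℚ))) Finset.univ]
    congr 2
    exact_mod_cast hsum
lemma eval_PP_half (r n : ℕ) :
    Polynomial.eval (1 / 2 : ℚ) (PP r (2 * n + 1)) = 0 := by
  rw [PP, Polynomial.eval_finset_sum]
  refine Finset.sum_eq_zero fun k hk => ?_
  obtain ⟨hsum, hpos⟩ := mem_TT.mp hk
  have hodd : ∃ i, Odd (k i) := by
    by_contra h
    push_neg at h
    have heven : Even (∑ i, k i) :=
      Finset.sum_induction k Even (fun a b ha hb => Even.add ha hb) Even.zero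
        (fun i _ => Nat.not_odd_iff_even.mp (h i))
    rw [hsum] at heven
    obtain ⟨c, hc⟩ := heven
    omega
  obtain ⟨i, hi⟩ := hodd
  rw [DD, Polynomial.eval_prod]
  refine Finset.prod_eq_zero (Finset.mem_univ i) ?_
  rw [ff, Polynomial.eval_mul, Polynomial.eval_C, bernoulli_eval_half hi, mul_zero]

lemma SS_eq_zero (n : ℕ) (hn : 1 ≤ n) :
    (∑ r ∈ Finset.range (2 * n + 1 + 1),
      Polynomial.C ((-(2 * (n : ℚ))) ^ r / (Nat.factorial r : ℚ)) * PP r (2 * n + 1)) = 0 := by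
  set x : ℚ := -(2 * (n : ℚ)) with hx
  set W : Polynomial ℚ :=
    ∑ r ∈ Finset.range (2 * n + 1), Polynomial.C (x ^ r / (Nat.factorial r : ℚ)) * PP r (2 * n)
    with hW
  have hg0 : Polynomial.C (x ^ 0 / (Nat.factorial 0 : ℚ)) * PP 0 (2 * n) = 0 := by
    rw [PP_zero_left (by omega), mul_zero]
  have hgM : Polynomial.C (x ^ (2 * n + 1) / (Nat.factorial (2 * n + 1) : ℚ))
      * PP (2 * n + 1) (2 * n) = 0 := by
    rw [PP_of_lt (by omega), mul_zero]
  have hshift : (∑ r ∈ Finset.range (2 * n + 1),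
      Polynomial.C (x ^ (r + 1) / (Nat.factorial (r + 1) : ℚ)) * PP (r + 1) (2 * n)) = W := by
    have h := Finset.sum_range_succ'
      (fun r => Polynomial.C (x ^ r / (Nat.factorial r : ℚ)) * PP r (2 * n)) (2 * n + 1)
    rw [Finset.sum_range_succ] at h
    rw [hgM, add_zero, hg0, add_zero] at h
    rw [← h, hW]
  have hder : Polynomial.derivative (∑ r ∈ Finset.range (2 * n + 1 + 1),
      Polynomial.C (x ^ r / (Nat.factorial r : ℚ)) * PP r (2 * n + 1)) = 0 := by
    rw [derivative_sum]
    have hterm : ∀ r ∈ Finset.range (2 * n + 1 + 1),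
        Polynomial.derivative (Polynomial.C (x ^ r / (Nat.factorial r : ℚ)) * PP r (2 * n + 1))
          = Polynomial.C (x ^ r / (Nat.factorial r : ℚ))
              * Polynomial.derivative (PP r (2 * n + 1)) :=
      fun r _ => derivative_C_mul _ _
    rw [Finset.sum_congr rfl hterm, Finset.sum_range_succ']
    have hz : Polynomial.C (x ^ 0 / (Nat.factorial 0 : ℚ))
        * Polynomial.derivative (PP 0 (2 * n + 1)) = 0 := by
      rw [PP_zero_left (by omega), derivative_zero, mul_zero]
    rw [hz, add_zero]
    have hstep : ∀ r ∈ Finset.range (2 * n + 1),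
        Polynomial.C (x ^ (r + 1) / (Nat.factorial (r + 1) : ℚ))
            * Polynomial.derivative (PP (r + 1) (2 * n + 1))
          = Polynomial.C x * (Polynomial.C (x ^ r / (Nat.factorial r : ℚ)) * PP r (2 * n))
            + Polynomial.C ((2 * n : ℕ) : ℚ)
              * (Polynomial.C (x ^ (r + 1) / (Nat.factorial (r + 1) : ℚ))
                  * PP (r + 1) (2 * n)) := by
      intro r _
      rw [derivative_PP r (2 * n), mul_add]
      congr 1
      · rw [← mul_assoc, ← mul_assoc, ← map_mul, ← map_mul]
        congr 2
        have hrf : ((Nat.factorial r : ℚ)) ≠ 0 :=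
          Nat.cast_ne_zero.mpr (Nat.factorial_ne_zero r)
        rw [Nat.factorial_succ]
        push_cast
        field_simp
        ring
      · ring
    rw [Finset.sum_congr rfl hstep, Finset.sum_add_distrib, ← Finset.mul_sum, ← Finset.mul_sum]
    rw [hshift, hW, ← add_mul, ← map_add]
    have hx0 : x + ((2 * n : ℕ) : ℚ) = 0 := by rw [hx]; push_cast; ring
    rw [hx0, Polynomial.C_0, zero_mul]
  have h0 := Polynomial.eq_C_of_derivative_eq_zero hder
  have he : Polynomial.eval (1 / 2 : ℚ) (∑ r ∈ Finset.range (2 * n + 1 + 1),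
      Polynomial.C (x ^ r / (Nat.factorial r : ℚ)) * PP r (2 * n + 1)) = 0 := by
    rw [Polynomial.eval_finset_sum]
    refine Finset.sum_eq_zero fun r _ => ?_
    rw [Polynomial.eval_mul, eval_PP_half, mul_zero]
  rw [h0, Polynomial.eval_C] at he
  rw [h0, he, map_zero]

end Bern18

open Finset

/-- The `k`-th Bernoulli polynomial evaluated at a real number `t`
(generating function `u e^{tu}/(e^u - 1)`, so `B 1 t = t - 1/2`). -/
noncomputable def bern (k : ℕ) (t : ℝ) : ℝ :=
  Polynomial.aeval t (Polynomial.bernoulli k)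

/-- the identity for Bernoulli polynomials
`∑_{r=1}^{2n+1} ((-2n)^r/r!) ∑_{k₁+⋯+k_r=2n+1, kᵢ≥1} (B_{k₁}(t)⋯B_{k_r}(t))/(k₁⋯k_r) = 0`,
the inner sum being over ordered tuples (compositions of `2n+1` into `r`
positive parts). -/
theorem bernoulli_polynomial_identity
    (n : ℕ) (hn : 1 ≤ n) (t : ℝ) :
    ∑ r ∈ Finset.Icc 1 (2 * n + 1),
        ((-(2 * (n : ℝ))) ^ r / (Nat.factorial r : ℝ)) *
          ∑ k ∈ (Finset.Nat.antidiagonalTuple r (2 * n + 1)).filter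
              (fun k => ∀ i, 1 ≤ k i),
            (∏ i, bern (k i) t) / (∏ i, ((k i : ℕ) : ℝ)) = 0 := by
  classical
  have h0 := Bern18.SS_eq_zero n hn
  -- convert the `range` sum into an `Icc` sum
  have h1 : (∑ r ∈ Finset.Icc 1 (2 * n + 1),
      Polynomial.C ((-(2 * (n : ℚ))) ^ r / (Nat.factorial r : ℚ))
        * Bern18.PP r (2 * n + 1)) = 0 := by
    rw [← h0, Finset.range_eq_Ico,
      Finset.sum_eq_sum_Ico_succ_bot (by omega : 0 < 2 * n + 1 + 1)]
    rw [Bern18.PP_zero_left (by omega), mul_zero, zero_add, Finset.Ico_add_one_right_eq_Icc]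
  have h2 := congrArg (Polynomial.aeval t) h1
  rw [map_sum, map_zero] at h2
  rw [← h2]
  refine Finset.sum_congr rfl fun r hr => ?_
  rw [map_mul, Polynomial.aeval_C]
  congr 1
  · rw [eq_ratCast (algebraMap ℚ ℝ)]
    push_cast
    ring
  · rw [Bern18.PP, map_sum]
    refine Finset.sum_congr rfl fun k hk => ?_
    rw [Bern18.DD, map_prod]
    have hterm : ∀ i : Fin r,
        Polynomial.aeval t (Bern18.ff (k i)) = bern (k i) t / ((k i : ℕ) : ℝ) := by
      intro i
      rw [Bern18.ff, map_mul, Polynomial.aeval_C, eq_ratCast (algebraMap ℚ ℝ)]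
      rw [Rat.cast_inv, Rat.cast_natCast]
      rw [div_eq_mul_inv, mul_comm]
      rfl
    rw [Finset.prod_congr rfl fun i _ => hterm i, Finset.prod_div_distrib]
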